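/- Let D = {(eᵢ,2)}ᵢ ∪ {(−eᵢ,1)}ᵢ ⊆ ℝ^d × ℝ as above, and let D' ⊊ D be any proper subset. Let w' be the minimum-norm minimizer of the empirical squared loss over D'. Then L_D(w') > L_D(w⋆) = 9/4, i.e., no proper subset (in particular none of size < 2d) allows the min-norm ERM to match the optimal loss on D. -/

import Mathlib

set_option maxHeartbeats 1000000

theorem basis_dataset_no_proper_subset
    (d : ℕ) (hd : 1 ≤ d)
    (X : Fin d ⊕ Fin d → EuclideanSpace ℝ (Fin d))
    (Y : Fin d ⊕ Fin d → ℝ)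
    (hX : ∀ i, X (Sum.inl i) = EuclideanSpace.single i (1:ℝ) ∧
               X (Sum.inr i) = -EuclideanSpace.single i (1:ℝ))
    (hY : ∀ i, Y (Sum.inl i) = 2 ∧ Y (Sum.inr i) = 1)
    (L : EuclideanSpace ℝ (Fin d) → ℝ)
    (hL : ∀ w, L w = (1 / (2*(d:ℝ))) * ∑ i, ((inner ℝ w (X i) : ℝ) - Y i)^2)
    (S : Finset (Fin d ⊕ Fin d)) (hS : S ≠ Finset.univ)
    (LS : EuclideanSpace ℝ (Fin d) → ℝ)
    (hLS : ∀ w, LS w = ((S.card : ℝ))⁻¹ * ∑ i ∈ S, ((inner ℝ w (X i) : ℝ) - Y i)^2)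
    (w' : EuclideanSpace ℝ (Fin d))
    (hmin : IsMinOn LS Set.univ w')
    (hnorm : ∀ w, IsMinOn LS Set.univ w → ‖w'‖ ≤ ‖w‖) :
    9/4 < L w' := by
  classical
  set U : Fin d → ℝ → EuclideanSpace ℝ (Fin d) :=
    fun j t => (WithLp.equiv 2 (Fin d → ℝ)).symm
      (Function.update (WithLp.equiv 2 (Fin d → ℝ) w') j t) with hU
  have hUapp : ∀ (j : Fin d) (t : ℝ) (k : Fin d),
      U j t k = if k = j then t else w' k := by
    intro j t k
    rw [hU]
    simp [Function.update_apply]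
  have hIL : ∀ (w : EuclideanSpace ℝ (Fin d)) (k : Fin d),
      (inner ℝ w (X (Sum.inl k)) : ℝ) = w k := by
    intro w k
    rw [(hX k).1, EuclideanSpace.inner_single_right]
    simp
  have hIR : ∀ (w : EuclideanSpace ℝ (Fin d)) (k : Fin d),
      (inner ℝ w (X (Sum.inr k)) : ℝ) = -(w k) := by
    intro w k
    rw [(hX k).2, inner_neg_right, EuclideanSpace.inner_single_right]
    simp
  -- sums over sets avoiding coordinate j are unchanged by updating coordinate j
  have hsum_eq : ∀ (j : Fin d) (t : ℝ) (T : Finset (Fin d ⊕ Fin d)),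
      Sum.inl j ∉ T → Sum.inr j ∉ T →
      ∑ i ∈ T, ((inner ℝ (U j t) (X i) : ℝ) - Y i)^2
        = ∑ i ∈ T, ((inner ℝ w' (X i) : ℝ) - Y i)^2 := by
    intro j t T hT1 hT2
    refine Finset.sum_congr rfl ?_
    intro i hi
    rcases i with k | k
    · have hk : k ≠ j := by rintro rfl; exact hT1 hi
      rw [hIL, hIL, hUapp, if_neg hk]
    · have hk : k ≠ j := by rintro rfl; exact hT2 hi
      rw [hIR, hIR, hUapp, if_neg hk]
  have hmin' := isMinOn_iff.mp hmin
  -- case A : neither constraint present, min-norm forces coordinate 0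
  have keyA : ∀ j : Fin d, Sum.inl j ∉ S → Sum.inr j ∉ S → w' j = 0 := by
    intro j hj1 hj2
    set u : EuclideanSpace ℝ (Fin d) := U j 0 with hu
    have hLSu : LS u = LS w' := by rw [hLS, hLS, hsum_eq j 0 S hj1 hj2]
    have humin : IsMinOn LS Set.univ u := by
      rw [isMinOn_iff]
      intro x hx
      rw [hLSu]
      exact hmin' x hx
    have hle := hnorm u humin
    rw [EuclideanSpace.norm_eq, EuclideanSpace.norm_eq] at hle
    have hle2 : ∑ i, ‖w' i‖^2 ≤ ∑ i, ‖u i‖^2 := by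
      nlinarith [Real.sq_sqrt (show (0:ℝ) ≤ ∑ i, ‖w' i‖^2 by positivity),
        Real.sq_sqrt (show (0:ℝ) ≤ ∑ i, ‖u i‖^2 by positivity),
        Real.sqrt_nonneg (∑ i, ‖w' i‖^2), Real.sqrt_nonneg (∑ i, ‖u i‖^2)]
    have hsplitw : ∑ i, ‖w' i‖^2 = ‖w' j‖^2 + ∑ i ∈ Finset.univ.erase j, ‖w' i‖^2 :=
      (Finset.add_sum_erase _ _ (Finset.mem_univ j)).symm
    have hsplitu : ∑ i, ‖u i‖^2 = ∑ i ∈ Finset.univ.erase j, ‖w' i‖^2 := by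
      rw [← Finset.add_sum_erase _ _ (Finset.mem_univ j)]
      have h1 : u j = 0 := by rw [hu, hUapp, if_pos rfl]
      have h2 : ∑ i ∈ Finset.univ.erase j, ‖u i‖^2
          = ∑ i ∈ Finset.univ.erase j, ‖w' i‖^2 := by
        refine Finset.sum_congr rfl ?_
        intro i hi
        rw [hu, hUapp, if_neg (Finset.ne_of_mem_erase hi)]
      rw [h1, h2]; simp
    have : ‖w' j‖^2 ≤ 0 := by rw [hsplitw, hsplitu] at hle2; linarith
    have : ‖w' j‖ = 0 := by nlinarith [norm_nonneg (w' j)]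
    simpa using this
  -- case B1 : only the (-e_j, 1) constraint present
  have keyB1 : ∀ j : Fin d, Sum.inl j ∉ S → Sum.inr j ∈ S → w' j = -1 := by
    intro j hj1 hj2
    set u : EuclideanSpace ℝ (Fin d) := U j (-1) with hu
    have hcpos : (0:ℝ) < (S.card : ℝ)⁻¹ := by
      have := Finset.card_pos.mpr ⟨_, hj2⟩
      positivity
    have hle := hmin' u (Set.mem_univ u)
    rw [hLS, hLS] at hle
    have hsplitw : ∑ i ∈ S, ((inner ℝ w' (X i) : ℝ) - Y i)^2
        = ((inner ℝ w' (X (Sum.inr j)) : ℝ) - Y (Sum.inr j))^2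
          + ∑ i ∈ S.erase (Sum.inr j), ((inner ℝ w' (X i) : ℝ) - Y i)^2 :=
      (Finset.add_sum_erase _ _ hj2).symm
    have hsplitu : ∑ i ∈ S, ((inner ℝ u (X i) : ℝ) - Y i)^2
        = ∑ i ∈ S.erase (Sum.inr j), ((inner ℝ w' (X i) : ℝ) - Y i)^2 := by
      rw [← Finset.add_sum_erase _ _ hj2,
        hsum_eq j (-1) _ (fun h => hj1 (Finset.mem_of_mem_erase h))
          (Finset.notMem_erase _ _)]
      have h1 : (inner ℝ u (X (Sum.inr j)) : ℝ) = -(u j) := hIR u j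
      have h2 : u j = -1 := by rw [hu, hUapp, if_pos rfl]
      rw [h1, h2, (hY j).2]
      norm_num
    rw [hsplitw, hsplitu] at hle
    have hterm : ((inner ℝ w' (X (Sum.inr j)) : ℝ) - Y (Sum.inr j))^2 ≤ 0 := by
      nlinarith
    have : ((inner ℝ w' (X (Sum.inr j)) : ℝ) - Y (Sum.inr j))^2 = 0 := by
      nlinarith [sq_nonneg ((inner ℝ w' (X (Sum.inr j)) : ℝ) - Y (Sum.inr j))]
    rw [hIR, (hY j).2] at this
    have := pow_eq_zero_iff (n := 2) (by norm_num) |>.mp this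
    linarith
  -- case B2 : only the (e_j, 2) constraint present
  have keyB2 : ∀ j : Fin d, Sum.inr j ∉ S → Sum.inl j ∈ S → w' j = 2 := by
    intro j hj1 hj2
    set u : EuclideanSpace ℝ (Fin d) := U j 2 with hu
    have hcpos : (0:ℝ) < (S.card : ℝ)⁻¹ := by
      have := Finset.card_pos.mpr ⟨_, hj2⟩
      positivity
    have hle := hmin' u (Set.mem_univ u)
    rw [hLS, hLS] at hle
    have hsplitw : ∑ i ∈ S, ((inner ℝ w' (X i) : ℝ) - Y i)^2
        = ((inner ℝ w' (X (Sum.inl j)) : ℝ) - Y (Sum.inl j))^2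
          + ∑ i ∈ S.erase (Sum.inl j), ((inner ℝ w' (X i) : ℝ) - Y i)^2 :=
      (Finset.add_sum_erase _ _ hj2).symm
    have hsplitu : ∑ i ∈ S, ((inner ℝ u (X i) : ℝ) - Y i)^2
        = ∑ i ∈ S.erase (Sum.inl j), ((inner ℝ w' (X i) : ℝ) - Y i)^2 := by
      rw [← Finset.add_sum_erase _ _ hj2,
        hsum_eq j 2 _ (Finset.notMem_erase _ _)
          (fun h => hj1 (Finset.mem_of_mem_erase h))]
      have h1 : (inner ℝ u (X (Sum.inl j)) : ℝ) = u j := hIL u j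
      have h2 : u j = 2 := by rw [hu, hUapp, if_pos rfl]
      rw [h1, h2, (hY j).1]
      norm_num
    rw [hsplitw, hsplitu] at hle
    have : ((inner ℝ w' (X (Sum.inl j)) : ℝ) - Y (Sum.inl j))^2 = 0 := by
      nlinarith [sq_nonneg ((inner ℝ w' (X (Sum.inl j)) : ℝ) - Y (Sum.inl j))]
    rw [hIL, (hY j).1] at this
    have := pow_eq_zero_iff (n := 2) (by norm_num) |>.mp this
    linarith
  -- obtain the missing index
  obtain ⟨a, ha⟩ : ∃ a, a ∉ S := by
    by_contra h
    push_neg at h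
    exact hS (Finset.eq_univ_iff_forall.mpr h)
  obtain ⟨j, hkey⟩ : ∃ j : Fin d, w' j = -1 ∨ w' j = 0 ∨ w' j = 2 := by
    rcases a with j | j
    · refine ⟨j, ?_⟩
      by_cases h : Sum.inr j ∈ S
      · exact Or.inl (keyB1 j ha h)
      · exact Or.inr (Or.inl (keyA j ha h))
    · refine ⟨j, ?_⟩
      by_cases h : Sum.inl j ∈ S
      · exact Or.inr (Or.inr (keyB2 j ha h))
      · exact Or.inr (Or.inl (keyA j h ha))
  -- compute the full loss
  rw [hL, Fintype.sum_sum_type]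
  have hrw1 : ∀ k : Fin d, ((inner ℝ w' (X (Sum.inl k)) : ℝ) - Y (Sum.inl k))^2
      = (w' k - 2)^2 := by intro k; rw [hIL, (hY k).1]
  have hrw2 : ∀ k : Fin d, ((inner ℝ w' (X (Sum.inr k)) : ℝ) - Y (Sum.inr k))^2
      = (-(w' k) - 1)^2 := by intro k; rw [hIR, (hY k).2]
  simp only [hrw1, hrw2]
  rw [← Finset.sum_add_distrib]
  have hgsplit : ∑ k : Fin d, ((w' k - 2)^2 + (-w' k - 1)^2)
      = ((w' j - 2)^2 + (-w' j - 1)^2)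
        + ∑ k ∈ Finset.univ.erase j, ((w' k - 2)^2 + (-w' k - 1)^2) :=
    (Finset.add_sum_erase _ (fun k => (w' k - 2)^2 + (-w' k - 1)^2)
      (Finset.mem_univ j)).symm
  have hgj : (5:ℝ) ≤ (w' j - 2)^2 + (-w' j - 1)^2 := by
    rcases hkey with h | h | h <;> rw [h] <;> norm_num
  have hglb : ∀ k ∈ Finset.univ.erase j,
      (9/2 : ℝ) ≤ (w' k - 2)^2 + (-w' k - 1)^2 := by
    intro k _
    nlinarith [sq_nonneg (w' k - 1/2)]
  have hcard : ((Finset.univ.erase j).card : ℝ) = (d : ℝ) - 1 := by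
    rw [Finset.card_erase_of_mem (Finset.mem_univ j)]
    simp only [Finset.card_univ, Fintype.card_fin]
    rw [Nat.cast_sub hd]
    norm_num
  have hrest : ((d:ℝ) - 1) * (9/2)
      ≤ ∑ k ∈ Finset.univ.erase j, ((w' k - 2)^2 + (-w' k - 1)^2) := by
    have := Finset.card_nsmul_le_sum _ _ _ hglb
    rw [nsmul_eq_mul] at this
    rw [← hcard]
    exact this
  have hSsum : (9/2:ℝ) * d + 1/2 ≤ ∑ k : Fin d, ((w' k - 2)^2 + (-w' k - 1)^2) := by
    rw [hgsplit]; linarith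
  have hdpos : (0:ℝ) < (d:ℝ) := by exact_mod_cast Nat.lt_of_lt_of_le Nat.zero_lt_one hd
  have hinv : (0:ℝ) < 1 / (2*(d:ℝ)) := by positivity
  have hmul : 1 / (2*(d:ℝ)) * (2*(d:ℝ)) = 1 := by field_simp
  nlinarith [mul_le_mul_of_nonneg_left hSsum (le_of_lt hinv)]
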